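/- Let m ≥ 1, s ∈ (1,∞) with conjugate exponent s′ = s/(s−1), let B be a ball in ℝ^n, let ν be a weight satisfying the reverse Hölder inequality (|B|^{−1}∫_B ν^s)^{1/s} ≤ C₀ · |B|^{−1}∫_B ν on B, and let b be locally integrable with (|B|^{−1}∫_B |b − b_B|^t)^{1/t} ≤ M, where t = max{1, s′/m}. Then (∫_B |b(x) − b_B|^{1/m} ν(x) dx)^m ≤ C₀^m · M · ν(B)^m. -/

import Mathlib

open MeasureTheory Metric ENNReal

noncomputable section

/-- Euclidean space `ℝ^n`. -/
abbrev Rn (n : ℕ) : Type := EuclideanSpace ℝ (Fin n)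

/-- A weight on `ℝ^n`: a measurable, everywhere positive, locally integrable function. -/
def IsWeight {n : ℕ} (w : Rn n → ℝ) : Prop :=
  Measurable w ∧ (∀ x, 0 < w x) ∧ LocallyIntegrable w volume

/-- The weighted measure `w(E) = ∫_E w` of a set `E`, as an extended nonnegative real. -/
def wtMass {n : ℕ} (w : Rn n → ℝ) (E : Set (Rn n)) : ℝ≥0∞ :=
  ∫⁻ x in E, ENNReal.ofReal (w x)

/-- The weighted `L^p` norm of `f` restricted to a set `E`:
`(∫_E |f|^p w)^(1/p)`. -/
def wtLpOn {n : ℕ} (p : ℝ) (w : Rn n → ℝ) (E : Set (Rn n)) (f : Rn n → ℝ) : ℝ≥0∞ :=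
  (∫⁻ x in E, ENNReal.ofReal |f x| ^ p * ENNReal.ofReal (w x)) ^ (1 / p)

/-- The weighted `L^p` norm `‖f‖_{L^p(w)}` on all of `ℝ^n`. -/
def wtLp {n : ℕ} (p : ℝ) (w : Rn n → ℝ) (f : Rn n → ℝ) : ℝ≥0∞ :=
  wtLpOn p w Set.univ f

/-- The weighted weak `L^p` quasinorm of `f` restricted to a set `E`:
`sup_{t>0} t · w({x ∈ E : |f x| > t})^(1/p)`. -/
def wtWLpOn {n : ℕ} (p : ℝ) (w : Rn n → ℝ) (E : Set (Rn n)) (f : Rn n → ℝ) : ℝ≥0∞ :=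
  ⨆ (t : ℝ) (_ : 0 < t), ENNReal.ofReal t * wtMass w {x ∈ E | t < |f x|} ^ (1 / p)

/-- The weighted weak `L^p` quasinorm `‖f‖_{WL^p(w)}` on all of `ℝ^n`. -/
def wtWLp {n : ℕ} (p : ℝ) (w : Rn n → ℝ) (f : Rn n → ℝ) : ℝ≥0∞ :=
  wtWLpOn p w Set.univ f

/-- The weighted amalgam norm `‖f‖_{(L^p,L^q)^α(w;μ)}`. -/
def amalgamNorm {n : ℕ} (p q α : ℝ) (w μ : Rn n → ℝ) (f : Rn n → ℝ) : ℝ≥0∞ :=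
  ⨆ (r : ℝ) (_ : 0 < r),
    (∫⁻ y, (wtMass w (ball y r) ^ (1/α - 1/p - 1/q) * wtLpOn p w (ball y r) f) ^ q *
      ENNReal.ofReal (μ y)) ^ (1/q)

/-- The weighted weak amalgam norm `‖f‖_{(WL^p,L^q)^α(w;μ)}`. -/
def wAmalgamNorm {n : ℕ} (p q α : ℝ) (w μ : Rn n → ℝ) (f : Rn n → ℝ) : ℝ≥0∞ :=
  ⨆ (r : ℝ) (_ : 0 < r),
    (∫⁻ y, (wtMass w (ball y r) ^ (1/α - 1/p - 1/q) * wtWLpOn p w (ball y r) f) ^ q *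
      ENNReal.ofReal (μ y)) ^ (1/q)

/-- The product weight `ν_{w⃗} = ∏_k w_k^{p/p_k}`. -/
def nuW {n m : ℕ} (p : ℝ) (pk : Fin m → ℝ) (w : Fin m → Rn n → ℝ) : Rn n → ℝ :=
  fun x => ∏ k, w k x ^ (p / pk k)

/-- The `k`-th factor in the multilinear `A_{P⃗}` condition on a set `B`:
`(|B|⁻¹ ∫_B w^{-p'/p})^{1/p'}` when `p > 1` (note `p'/p = 1/(p-1)` and `1/p' = (p-1)/p`),
and `(essinf_B w)⁻¹` when `p = 1`. -/
def apFactor {n : ℕ} (pk : ℝ) (w : Rn n → ℝ) (B : Set (Rn n)) : ℝ≥0∞ :=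
  if pk = 1 then (essInf (fun x => ENNReal.ofReal (w x)) (volume.restrict B))⁻¹
  else ((volume B)⁻¹ * ∫⁻ x in B, ENNReal.ofReal (w x ^ (-(1 / (pk - 1))))) ^ ((pk - 1) / pk)

/-- The multilinear `A_{P⃗}` condition with constant `CW`. -/
def MultiAP {n m : ℕ} (p : ℝ) (pk : Fin m → ℝ) (w : Fin m → Rn n → ℝ) (CW : ℝ) : Prop :=
  ∀ (y : Rn n) (r : ℝ), 0 < r →
    ((volume (ball y r))⁻¹ * wtMass (nuW p pk w) (ball y r)) ^ (1/p) *
      (∏ k, apFactor (pk k) (w k) (ball y r)) ≤ ENNReal.ofReal CW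

/-- The `A_∞`-comparison condition with constants `Cc`, `δ`. -/
def AinfCompare {n : ℕ} (w : Rn n → ℝ) (Cc δ : ℝ) : Prop :=
  ∀ (y : Rn n) (r : ℝ), 0 < r → ∀ E : Set (Rn n), MeasurableSet E → E ⊆ ball y r →
    wtMass w E ≤ ENNReal.ofReal Cc * (volume E / volume (ball y r)) ^ δ * wtMass w (ball y r)

/-- Doubling condition with constant `Cd`. -/
def DoublingWt {n : ℕ} (w : Rn n → ℝ) (Cd : ℝ) : Prop :=
  ∀ (y : Rn n) (r : ℝ), 0 < r →
    wtMass w (ball y (2*r)) ≤ ENNReal.ofReal Cd * wtMass w (ball y r)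

/-- Reverse Jensen inequality with constant `CJ`. -/
def RevJensen {n : ℕ} (w : Rn n → ℝ) (CJ : ℝ) : Prop :=
  LocallyIntegrable (fun x => Real.log (w x)) volume ∧
  ∀ (y : Rn n) (r : ℝ), 0 < r →
    (∫ x in ball y r, w x) ≤
      CJ * (volume (ball y r)).toReal *
        Real.exp ((volume (ball y r)).toReal⁻¹ * ∫ x in ball y r, Real.log (w x))

/-- `T` is a.e. `m`-linear. -/
def AEMultilinear {n m : ℕ} (T : (Fin m → Rn n → ℝ) → Rn n → ℝ) : Prop :=
  ∀ g : Fin m → Rn n → ℝ, (∀ k, Measurable (g k)) →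
    ∀ (k : Fin m) (c : ℝ) (h : Rn n → ℝ), Measurable h →
      ∀ᵐ x ∂(volume : Measure (Rn n)),
        T (Function.update g k (fun y => c * g k y + h y)) x =
          c * T g x + T (Function.update g k h) x

/-- The complement of the essential support of `g`: the union of all open sets
on which `g` vanishes almost everywhere. -/
def essSuppCompl {n : ℕ} (g : Rn n → ℝ) : Set (Rn n) :=
  {x | ∃ U : Set (Rn n), IsOpen U ∧ x ∈ U ∧ ∀ᵐ y ∂(volume.restrict U), g y = 0}

/-- The multilinear size property with constant `A`: for a.e. `x` outside the essential
support of one of the entries, `|T(g⃗)(x)|` is dominated by the standard multilinear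
fractional kernel applied to `|g_k|`. -/
def SizeProp {n m : ℕ} (T : (Fin m → Rn n → ℝ) → Rn n → ℝ) (A : ℝ) : Prop :=
  ∀ g : Fin m → Rn n → ℝ, (∀ k, Measurable (g k)) → ∀ k₀ : Fin m,
    ∀ᵐ x ∂(volume.restrict (essSuppCompl (g k₀))),
      ENNReal.ofReal |T g x| ≤ ENNReal.ofReal A *
        ∫⁻ z : Fin m → Rn n,
          (∏ k, ENNReal.ofReal |g k (z k)|) /
            ENNReal.ofReal ((∑ k, dist x (z k)) ^ (m * n))

/-- `b_B`: the average of `b` over the ball `B(y,r)`. -/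
def ballAvg {n : ℕ} (b : Rn n → ℝ) (y : Rn n) (r : ℝ) : ℝ :=
  (volume (ball y r)).toReal⁻¹ * ∫ x in ball y r, b x

/-- The BMO seminorm of `b` is bounded by `M`. -/
def BMOBound {n : ℕ} (b : Rn n → ℝ) (M : ℝ) : Prop :=
  ∀ (y : Rn n) (r : ℝ), 0 < r →
    (volume (ball y r)).toReal⁻¹ * (∫ x in ball y r, |b x - ballAvg b y r|) ≤ M

/-- The commutator `[b,T]_k` in the `k`-th slot. -/
def commAt {n m : ℕ} (b : Rn n → ℝ) (k : Fin m)
    (T : (Fin m → Rn n → ℝ) → Rn n → ℝ) : (Fin m → Rn n → ℝ) → Rn n → ℝ :=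
  fun f x => b x * T f x - T (Function.update f k (fun y => b y * f k y)) x

/-- The multilinear commutator `[Σb⃗, T] = Σ_k [b_k,T]_k`. -/
def sumComm {n m : ℕ} (b : Fin m → Rn n → ℝ)
    (T : (Fin m → Rn n → ℝ) → Rn n → ℝ) : (Fin m → Rn n → ℝ) → Rn n → ℝ :=
  fun f x => ∑ k, commAt (b k) k T f x

/-- The iterated commutator `[Πb⃗, T] = [b_1,[b_2,…[b_{m-1},[b_m,T]_m]_{m-1}…]_2]_1`. -/
def iterComm {n m : ℕ} (b : Fin m → Rn n → ℝ)
    (T : (Fin m → Rn n → ℝ) → Rn n → ℝ) : (Fin m → Rn n → ℝ) → Rn n → ℝ :=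
  (List.finRange m).foldr (fun k S => commAt (b k) k S) T

/-- `Φ(t) = t(1 + log⁺ t)`. -/
def phiLL (t : ℝ) : ℝ := t * (1 + max (Real.log t) 0)

/-- The `L log L` Luxemburg norm of `f` over `B` with respect to the weight `w`:
`inf {σ > 0 : w(B)⁻¹ ∫_B Φ(|f|/σ) w ≤ 1}` (equal to `⊤` if no such `σ` exists). -/
def llogLOn {n : ℕ} (w : Rn n → ℝ) (B : Set (Rn n)) (f : Rn n → ℝ) : ℝ≥0∞ :=
  sInf {σ : ℝ≥0∞ | ∃ s : ℝ, 0 < s ∧ σ = ENNReal.ofReal s ∧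
    (wtMass w B)⁻¹ *
      (∫⁻ x in B, ENNReal.ofReal (phiLL (|f x| / s)) * ENNReal.ofReal (w x)) ≤ 1}

/-- The weighted amalgam norm of `L log L` type, `‖f‖_{(L log L, L^q)^α(w;μ)}`. -/
def llogLAmalgam {n : ℕ} (q α : ℝ) (w μ : Rn n → ℝ) (f : Rn n → ℝ) : ℝ≥0∞ :=
  ⨆ (r : ℝ) (_ : 0 < r),
    (∫⁻ y, (wtMass w (ball y r) ^ (1/α - 1/q) * llogLOn w (ball y r) f) ^ q *
      ENNReal.ofReal (μ y)) ^ (1/q)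

/-- Reverse Hölder inequality with exponent `s` and constant `CR`. -/
def RevHolder {n : ℕ} (w : Rn n → ℝ) (s CR : ℝ) : Prop :=
  ∀ (y : Rn n) (r : ℝ), 0 < r →
    ((volume (ball y r))⁻¹ * ∫⁻ x in ball y r, ENNReal.ofReal (w x ^ s)) ^ (1/s) ≤
      ENNReal.ofReal CR * ((volume (ball y r))⁻¹ * wtMass w (ball y r))

private lemma lint_rpow_le {α : Type*} [MeasurableSpace α] (μ : Measure α) {G : α → ℝ≥0∞}
    (hG : AEMeasurable G μ) {u : ℝ} (hu : 0 < u) (hu1 : u ≤ 1) :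
    ∫⁻ x, G x ^ u ∂μ ≤ (∫⁻ x, G x ∂μ) ^ u * (μ Set.univ) ^ (1 - u) := by
  rcases eq_or_lt_of_le hu1 with h1 | h1
  · simp [h1]
  · have hpq : (u⁻¹).HolderConjugate ((1 - u)⁻¹) :=
      Real.HolderConjugate.inv_one_sub_inv hu h1
    have H := ENNReal.lintegral_mul_le_Lp_mul_Lq μ hpq (hG.pow_const u)
      (aemeasurable_const (b := (1:ℝ≥0∞)))
    simp only [Pi.mul_apply, mul_one, ENNReal.one_rpow, lintegral_const, one_mul,
      one_div, inv_inv] at H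
    have e1 : ∀ x, (G x ^ u) ^ (u⁻¹) = G x := fun x => by
      rw [← ENNReal.rpow_mul, mul_inv_cancel₀ hu.ne', ENNReal.rpow_one]
    simp only [e1] at H
    exact H

/-- under a reverse Hölder inequality for `ν` on the ball `B` and an
`L^t` oscillation bound for `b` with `t = max{1, s'/m}`,
`(∫_B |b − b_B|^{1/m} ν)^m ≤ C₀^m M ν(B)^m`. -/
theorem oscillation_power_weighted_bound
    {n m : ℕ} (hm : 1 ≤ m) (s : ℝ) (hs : 1 < s)
    (y : Rn n) (r : ℝ) (hr : 0 < r)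
    (ν : Rn n → ℝ) (hν : IsWeight ν) (C₀ : ℝ)
    (hRH : ((volume (ball y r))⁻¹ * ∫⁻ x in ball y r, ENNReal.ofReal (ν x ^ s)) ^ (1/s) ≤
      ENNReal.ofReal C₀ * ((volume (ball y r))⁻¹ * wtMass ν (ball y r)))
    (b : Rn n → ℝ) (hb : LocallyIntegrable b volume) (M : ℝ)
    (hbM : ((volume (ball y r))⁻¹ *
        ∫⁻ x in ball y r,
          ENNReal.ofReal (|b x - ballAvg b y r| ^ (max 1 ((s/(s-1))/(m:ℝ))))) ^
          (1 / max 1 ((s/(s-1))/(m:ℝ))) ≤ ENNReal.ofReal M) :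
    (∫⁻ x in ball y r,
        ENNReal.ofReal (|b x - ballAvg b y r| ^ ((1:ℝ)/(m:ℝ))) * ENNReal.ofReal (ν x)) ^ (m:ℕ)
      ≤ ENNReal.ofReal (C₀ ^ m * M) * wtMass ν (ball y r) ^ (m:ℕ) := by
  classical
  set B := ball y r with hB
  have hV0 : volume B ≠ 0 := (measure_ball_pos volume y hr).ne'
  have hVt : volume B ≠ ∞ := measure_ball_lt_top.ne
  set V := volume B with hVdef
  set c := ballAvg b y r with hc
  set G : Rn n → ℝ≥0∞ := fun x => ENNReal.ofReal |b x - c| with hGdef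
  have hGm : AEMeasurable G (volume.restrict B) :=
    ((measurable_abs.comp_aemeasurable (hb.aestronglyMeasurable.aemeasurable.sub aemeasurable_const)).ennreal_ofReal).restrict
  have hνm : Measurable fun x => ENNReal.ofReal (ν x) := hν.1.ennreal_ofReal
  have hm' : (1:ℝ) ≤ (m:ℝ) := by exact_mod_cast hm
  have hm0 : (0:ℝ) < (m:ℝ) := by linarith
  set s' : ℝ := s / (s - 1) with hs'def
  have hss' : s'.HolderConjugate s := (Real.HolderConjugate.conjExponent hs).symm
  have hs'1 : 1 < s' := hss'.lt
  set u : ℝ := s' / (m:ℝ) with hu_def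
  have hu : 0 < u := div_pos (by linarith) hm0
  have hs'0 : s' ≠ 0 := ne_of_gt (lt_trans zero_lt_one hs'1)
  have hmr : (m:ℝ) ≠ 0 := ne_of_gt hm0
  have hof : ∀ (p : ℝ), 0 ≤ p → ∀ x, ENNReal.ofReal (|b x - c| ^ p) = G x ^ p :=
    fun p hp x => (ENNReal.ofReal_rpow_of_nonneg (abs_nonneg _) hp).symm
  set M' := ENNReal.ofReal M with hM'
  set C' := ENNReal.ofReal C₀ with hC'
  set N := wtMass ν B with hN
  -- Key claim: ∫ G^u ≤ M'^u * V
  have key : ∫⁻ x in B, G x ^ u ≤ M' ^ u * V := by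
    rcases le_total u 1 with h1 | h1
    · have hmax : max 1 u = 1 := max_eq_left h1
      rw [hmax] at hbM
      simp only [Real.rpow_one, div_one, ENNReal.rpow_one] at hbM
      have hJeq : ∫⁻ x in B, ENNReal.ofReal |b x - c| = ∫⁻ x in B, G x := rfl
      rw [hJeq] at hbM
      have hJ : ∫⁻ x in B, G x ≤ M' * V := by
        calc ∫⁻ x in B, G x = V * (V⁻¹ * ∫⁻ x in B, G x) := by
              rw [← mul_assoc, ENNReal.mul_inv_cancel hV0 hVt, one_mul]
          _ ≤ V * M' := mul_le_mul_right hbM V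
          _ = M' * V := mul_comm _ _
      calc ∫⁻ x in B, G x ^ u
          ≤ (∫⁻ x in B, G x) ^ u * ((volume.restrict B) Set.univ) ^ (1 - u) :=
            lint_rpow_le _ hGm hu h1
        _ ≤ (M' * V) ^ u * V ^ (1 - u) := by
            rw [Measure.restrict_apply_univ]
            exact mul_le_mul_left (ENNReal.rpow_le_rpow hJ hu.le) _
        _ = M' ^ u * (V ^ u * V ^ (1 - u)) := by
            rw [ENNReal.mul_rpow_of_nonneg _ _ hu.le, mul_assoc]
        _ = M' ^ u * V := by
            rw [← ENNReal.rpow_add _ _ hV0 hVt]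
            norm_num
    · have hmax : max 1 u = u := max_eq_right h1
      rw [hmax] at hbM
      have hIeq : ∫⁻ x in B, ENNReal.ofReal (|b x - c| ^ u) = ∫⁻ x in B, G x ^ u :=
        lintegral_congr fun x => hof u hu.le x
      rw [hIeq] at hbM
      have h2 := ENNReal.rpow_le_rpow hbM hu.le
      rw [← ENNReal.rpow_mul, one_div, inv_mul_cancel₀ hu.ne', ENNReal.rpow_one] at h2
      calc ∫⁻ x in B, G x ^ u = V * (V⁻¹ * ∫⁻ x in B, G x ^ u) := by
            rw [← mul_assoc, ENNReal.mul_inv_cancel hV0 hVt, one_mul]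
        _ ≤ V * M' ^ u := mul_le_mul_right h2 V
        _ = M' ^ u * V := mul_comm _ _
  -- Hölder on the main integral
  have holder : (∫⁻ x in B, G x ^ ((1:ℝ)/(m:ℝ)) * ENNReal.ofReal (ν x)) ≤
      (∫⁻ x in B, G x ^ u) ^ (1/s') * (∫⁻ x in B, ENNReal.ofReal (ν x) ^ s) ^ (1/s) := by
    have H := ENNReal.lintegral_mul_le_Lp_mul_Lq (volume.restrict B) hss'
      (hGm.pow_const ((1:ℝ)/(m:ℝ))) hνm.aemeasurable
    simp only [Pi.mul_apply] at H
    have e : ∀ x, (G x ^ ((1:ℝ)/(m:ℝ))) ^ s' = G x ^ u := fun x => by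
      rw [← ENNReal.rpow_mul]
      congr 1
      rw [hu_def]
      field_simp [hs'0, hmr]
      all_goals ring
    simp only [e] at H
    exact H
  -- Reverse Hölder step
  have hSeq : ∫⁻ x in B, ENNReal.ofReal (ν x ^ s) = ∫⁻ x in B, ENNReal.ofReal (ν x) ^ s :=
    lintegral_congr fun x => (ENNReal.ofReal_rpow_of_nonneg (hν.2.1 x).le (by linarith : (0:ℝ) ≤ s)).symm
  rw [hSeq] at hRH
  have hνstep : (∫⁻ x in B, ENNReal.ofReal (ν x) ^ s) ^ (1/s) ≤
      V ^ ((1:ℝ)/s) * (C' * (V⁻¹ * N)) := by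
    have e : (∫⁻ x in B, ENNReal.ofReal (ν x) ^ s) ^ (1/s) =
        V ^ ((1:ℝ)/s) * (V⁻¹ * ∫⁻ x in B, ENNReal.ofReal (ν x) ^ s) ^ (1/s) := by
      rw [← ENNReal.mul_rpow_of_nonneg _ _ (by positivity : (0:ℝ) ≤ 1/s),
        ← mul_assoc, ENNReal.mul_inv_cancel hV0 hVt, one_mul]
    rw [e]
    exact mul_le_mul_right hRH _
  -- combine
  have final1 : (∫⁻ x in B, G x ^ ((1:ℝ)/(m:ℝ)) * ENNReal.ofReal (ν x)) ≤
      C' * M' ^ ((1:ℝ)/(m:ℝ)) * N := by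
    have e1 : (M' ^ u) ^ ((1:ℝ)/s') = M' ^ ((1:ℝ)/(m:ℝ)) := by
      rw [← ENNReal.rpow_mul]
      congr 1
      rw [hu_def]
      field_simp [hs'0, hmr]
      all_goals ring
    have e2 : V ^ ((1:ℝ)/s') * V ^ ((1:ℝ)/s) = V := by
      rw [← ENNReal.rpow_add _ _ hV0 hVt]
      have : (1:ℝ)/s' + 1/s = 1 := by
        have := hss'.inv_add_inv_eq_one
        rw [one_div, one_div]
        linarith
      rw [this, ENNReal.rpow_one]
    calc (∫⁻ x in B, G x ^ ((1:ℝ)/(m:ℝ)) * ENNReal.ofReal (ν x))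
        ≤ (∫⁻ x in B, G x ^ u) ^ (1/s') * (∫⁻ x in B, ENNReal.ofReal (ν x) ^ s) ^ (1/s) :=
          holder
      _ ≤ (M' ^ u * V) ^ ((1:ℝ)/s') * (V ^ ((1:ℝ)/s) * (C' * (V⁻¹ * N))) :=
          mul_le_mul' (ENNReal.rpow_le_rpow key (by positivity)) hνstep
      _ = (M' ^ ((1:ℝ)/(m:ℝ)) * V ^ ((1:ℝ)/s')) * (V ^ ((1:ℝ)/s) * (C' * (V⁻¹ * N))) := by
          rw [ENNReal.mul_rpow_of_nonneg _ _ (by positivity : (0:ℝ) ≤ 1/s'), e1]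
      _ = C' * M' ^ ((1:ℝ)/(m:ℝ)) * N * (V ^ ((1:ℝ)/s') * V ^ ((1:ℝ)/s) * V⁻¹) := by
          ring
      _ = C' * M' ^ ((1:ℝ)/(m:ℝ)) * N := by
          rw [e2, ENNReal.mul_inv_cancel hV0 hVt, mul_one]
  -- conclude
  have hint : ∫⁻ x in B, ENNReal.ofReal (|b x - c| ^ ((1:ℝ)/(m:ℝ))) * ENNReal.ofReal (ν x)
      = ∫⁻ x in B, G x ^ ((1:ℝ)/(m:ℝ)) * ENNReal.ofReal (ν x) :=
    lintegral_congr fun x => by rw [hof _ (by positivity) x]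
  rw [hint]
  have hmn : m ≠ 0 := by omega
  have step : (∫⁻ x in B, G x ^ ((1:ℝ)/(m:ℝ)) * ENNReal.ofReal (ν x)) ^ (m:ℕ)
      ≤ (C' * M' ^ ((1:ℝ)/(m:ℝ)) * N) ^ (m:ℕ) := pow_le_pow_left₀ zero_le final1 m
  have expand : (C' * M' ^ ((1:ℝ)/(m:ℝ)) * N) ^ (m:ℕ) = C' ^ m * M' * N ^ m := by
    rw [mul_pow, mul_pow]
    congr 1
    congr 1
    rw [← ENNReal.rpow_natCast (M' ^ ((1:ℝ)/(m:ℝ))) m, ← ENNReal.rpow_mul, one_div,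
      inv_mul_cancel₀ (by exact_mod_cast hmn : (m:ℝ) ≠ 0), ENNReal.rpow_one]
  have coeff : C' ^ m * M' ≤ ENNReal.ofReal (C₀ ^ m * M) := by
    rcases le_or_gt M 0 with hM | hM
    · rw [hM', ENNReal.ofReal_of_nonpos hM, mul_zero]
      exact zero_le
    rcases le_or_gt C₀ 0 with hC | hC
    · rw [hC', ENNReal.ofReal_of_nonpos hC, zero_pow hmn, zero_mul]
      exact zero_le
    rw [ENNReal.ofReal_mul (by positivity), ENNReal.ofReal_pow hC.le]
  calc (∫⁻ x in B, G x ^ ((1:ℝ)/(m:ℝ)) * ENNReal.ofReal (ν x)) ^ (m:ℕ)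
      ≤ C' ^ m * M' * N ^ m := by rw [← expand]; exact step
    _ ≤ ENNReal.ofReal (C₀ ^ m * M) * N ^ m := mul_le_mul_left coeff _
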